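/- Let f : [0,1] → ℝ≥0 be a monotonically increasing function satisfying the superadditivity property f(√(x²+y²))^η ≥ f(x)^η + f(y)^η for all x,y ≥ 0 with x²+y² ≤ 1, where η ≥ 1. If 0 ≤ α ≤ η/2, k ≥ 1, ω ≥ 1, and f(y)^η ≥ k^ω · f(x)^η with f(x) > 0, then f(√(x²+y²))^α ≥ (1/2)^(α/η) f(x)^α + ((1+k^ω)^(α/η) - (1/2)^(α/η))/k^(ωα/η) · f(y)^α. -/

import Mathlib

open Real

lemma key_deriv (t : ℝ) (z : ℝ) (hz : 0 < z) :
    HasDerivAt (fun s : ℝ => (1 + s) ^ t - (1 / 2 : ℝ) ^ t * s ^ t)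
      (1 * t * (1 + z) ^ (t - 1) - (1 / 2 : ℝ) ^ t * (1 * t * z ^ (t - 1))) z := by
  have h1 : HasDerivAt (fun s : ℝ => 1 + s) 1 z := by
    simpa using (hasDerivAt_id z).const_add (1 : ℝ)
  have h2 : HasDerivAt (fun s : ℝ => (1 + s) ^ t) (1 * t * (1 + z) ^ (t - 1)) z :=
    h1.rpow_const (Or.inl (by positivity))
  have h3 : HasDerivAt (fun s : ℝ => s ^ t) (1 * t * z ^ (t - 1)) z :=
    (hasDerivAt_id z).rpow_const (Or.inl (ne_of_gt hz))
  exact h2.sub (h3.const_mul _)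

lemma key_anti (t : ℝ) (ht0 : 0 ≤ t) (ht : t ≤ 1 / 2) (s0 : ℝ) (hs0 : 0 < s0) :
    AntitoneOn (fun s : ℝ => (1 + s) ^ t - (1 / 2 : ℝ) ^ t * s ^ t) (Set.Icc s0 1) := by
  apply antitoneOn_of_deriv_nonpos (convex_Icc s0 1)
  · intro z hz
    have hz0 : 0 < z := lt_of_lt_of_le hs0 hz.1
    exact ((key_deriv t z hz0).differentiableAt).continuousAt.continuousWithinAt
  · intro z hz
    rw [interior_Icc] at hz
    have hz0 : 0 < z := lt_trans hs0 hz.1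
    exact ((key_deriv t z hz0).differentiableAt).differentiableWithinAt
  · intro z hz
    rw [interior_Icc] at hz
    have hz0 : 0 < z := lt_trans hs0 hz.1
    have hz1 : z < 1 := hz.2
    rw [(key_deriv t z hz0).deriv]
    have h1z : (0:ℝ) < 1 + z := by linarith
    have key : (1 + z) ^ (t - 1) ≤ (1 / 2 : ℝ) ^ t * z ^ (t - 1) := by
      have hzt : (0:ℝ) < z ^ (t - 1) := Real.rpow_pos_of_pos hz0 _
      rw [← div_le_iff₀ hzt]
      have e1 : (1 + z) ^ (t - 1) / z ^ (t - 1) = ((1 + z) / z) ^ (t - 1) := by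
        rw [Real.div_rpow h1z.le hz0.le]
      rw [e1]
      have hu : (2:ℝ) ≤ (1 + z) / z := by
        rw [le_div_iff₀ hz0]; linarith
      have step1 : ((1 + z) / z) ^ (t - 1) ≤ (2:ℝ) ^ (t - 1) :=
        Real.rpow_le_rpow_of_nonpos (by norm_num) hu (by linarith)
      have step2 : (2:ℝ) ^ (t - 1) ≤ (2:ℝ) ^ (-t) :=
        (Real.rpow_le_rpow_left_iff (by norm_num)).2 (by linarith)
      have e2 : (2:ℝ) ^ (-t) = (1 / 2 : ℝ) ^ t := by
        rw [Real.rpow_neg (by norm_num), ← Real.inv_rpow (by norm_num)]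
        norm_num
      calc ((1 + z) / z) ^ (t - 1) ≤ (2:ℝ) ^ (t - 1) := step1
        _ ≤ (2:ℝ) ^ (-t) := step2
        _ = (1 / 2 : ℝ) ^ t := e2
    nlinarith [key]

lemma key_ineq (t K a b : ℝ) (ht0 : 0 ≤ t) (ht : t ≤ 1 / 2) (hK : 1 ≤ K)
    (ha : 0 < a) (hb : 0 < b) (hab : K * a ≤ b) :
    (1 / 2 : ℝ) ^ t * a ^ t + ((1 + K) ^ t - (1 / 2 : ℝ) ^ t) / K ^ t * b ^ t
      ≤ (a + b) ^ t := by
  have hK0 : (0:ℝ) < K := by linarith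
  set s : ℝ := a / b with hs_def
  have hs0 : 0 < s := div_pos ha hb
  have hsK : s ≤ 1 / K := by
    rw [hs_def, div_le_div_iff₀ hb hK0]
    linarith
  have hKinv : (0:ℝ) < 1 / K := by positivity
  have hK1 : 1 / K ≤ 1 := by
    rw [div_le_one hK0]; exact hK
  have hs1 : s ≤ 1 := hsK.trans hK1
  have hanti := key_anti t ht0 ht s hs0
  have hmain : (1 + 1/K) ^ t - (1 / 2 : ℝ) ^ t * (1/K) ^ t
      ≤ (1 + s) ^ t - (1 / 2 : ℝ) ^ t * s ^ t :=
    hanti ⟨le_refl s, hs1⟩ ⟨hsK, hK1⟩ hsK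
  have hbt : (0:ℝ) < b ^ t := Real.rpow_pos_of_pos hb _
  have hKt : (0:ℝ) < K ^ t := Real.rpow_pos_of_pos hK0 _
  -- translate both sides after multiplying by b^t
  have e1 : (1 + s) ^ t * b ^ t = (a + b) ^ t := by
    rw [← Real.mul_rpow (by positivity) hb.le]
    congr 1
    rw [hs_def, add_mul, one_mul, div_mul_cancel₀ a hb.ne', add_comm]
  have e2 : s ^ t * b ^ t = a ^ t := by
    rw [← Real.mul_rpow hs0.le hb.le]
    congr 1
    field_simp [hs_def]
    rw [hs_def, div_mul_cancel₀ a hb.ne']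
  have e3 : (1 + 1/K) ^ t = (1 + K) ^ t / K ^ t := by
    rw [← Real.div_rpow (by positivity) hK0.le]
    congr 1
    field_simp
    ring
  have e4 : (1/K : ℝ) ^ t = 1 / K ^ t := by
    rw [Real.div_rpow (by norm_num) hK0.le, Real.one_rpow]
  have := mul_le_mul_of_nonneg_right hmain hbt.le
  rw [sub_mul, sub_mul, mul_assoc, mul_assoc, e1, e2, e3, e4] at this
  have expand : ((1 + K) ^ t - (1 / 2 : ℝ) ^ t) / K ^ t * b ^ t
      = (1 + K) ^ t / K ^ t * b ^ t - (1 / 2 : ℝ) ^ t * (1 / K ^ t * b ^ t) := by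
    field_simp
  linarith [this, expand.le, expand.ge]

theorem stmt_8 (f : ℝ → ℝ) (η α k ω x y : ℝ)
    (hf_nonneg : ∀ z ∈ Set.Icc (0 : ℝ) 1, 0 ≤ f z)
    (hf_mono : MonotoneOn f (Set.Icc (0 : ℝ) 1))
    (hη : 1 ≤ η)
    (hf_super : ∀ u v : ℝ, 0 ≤ u → 0 ≤ v → u ^ 2 + v ^ 2 ≤ 1 →
      f (Real.sqrt (u ^ 2 + v ^ 2)) ^ η ≥ f u ^ η + f v ^ η)
    (hα0 : 0 ≤ α) (hα : α ≤ η / 2) (hk : 1 ≤ k) (hω : 1 ≤ ω)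
    (hx : 0 ≤ x) (hy : 0 ≤ y) (hxy : x ^ 2 + y ^ 2 ≤ 1)
    (hfx : 0 < f x) (hcond : f y ^ η ≥ k ^ ω * f x ^ η) :
    f (Real.sqrt (x ^ 2 + y ^ 2)) ^ α ≥
      (1 / 2 : ℝ) ^ (α / η) * f x ^ α +
        ((1 + k ^ ω) ^ (α / η) - (1 / 2 : ℝ) ^ (α / η)) / k ^ (ω * α / η) * f y ^ α := by
  have hη0 : (0:ℝ) < η := by linarith
  have hk0 : (0:ℝ) < k := by linarith
  have hy1 : y ≤ 1 := by nlinarith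
  have hfy0 : 0 ≤ f y := hf_nonneg y ⟨hy, hy1⟩
  have hK : (1:ℝ) ≤ k ^ ω := Real.one_le_rpow hk (by linarith)
  have hfy : 0 < f y := by
    rcases eq_or_lt_of_le hfy0 with h | h
    · exfalso
      have : f y ^ η = 0 := by rw [← h, Real.zero_rpow (by linarith)]
      have hpos : 0 < k ^ ω * f x ^ η := by
        have := Real.rpow_pos_of_pos hfx η
        nlinarith
      linarith [hcond, this ▸ hcond]
    · exact h
  have hsq0 : 0 ≤ Real.sqrt (x ^ 2 + y ^ 2) := Real.sqrt_nonneg _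
  have hsq1 : Real.sqrt (x ^ 2 + y ^ 2) ≤ 1 := by
    rw [show (1:ℝ) = Real.sqrt 1 by simp]
    exact Real.sqrt_le_sqrt hxy
  have hF0 : 0 ≤ f (Real.sqrt (x ^ 2 + y ^ 2)) := hf_nonneg _ ⟨hsq0, hsq1⟩
  set t : ℝ := α / η with ht_def
  have ht0 : 0 ≤ t := div_nonneg hα0 hη0.le
  have ht : t ≤ 1 / 2 := by
    rw [ht_def, div_le_div_iff₀ hη0 (by norm_num)]
    linarith
  have hsuper := hf_super x y hx hy hxy
  have key := key_ineq t (k ^ ω) (f x ^ η) (f y ^ η) ht0 ht hK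
    (Real.rpow_pos_of_pos hfx η) (Real.rpow_pos_of_pos hfy η) hcond
  -- rewrite all α-powers as η-powers to the t
  have eF : f (Real.sqrt (x ^ 2 + y ^ 2)) ^ α
      = (f (Real.sqrt (x ^ 2 + y ^ 2)) ^ η) ^ t := by
    rw [← Real.rpow_mul hF0]
    congr 1
    field_simp [ht_def, hη0.ne']
    rw [ht_def, mul_div_assoc', mul_div_cancel_left₀ α hη0.ne']
  have ex : f x ^ α = (f x ^ η) ^ t := by
    rw [← Real.rpow_mul hfx.le]
    congr 1
    field_simp [ht_def, hη0.ne']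
    rw [ht_def, mul_div_assoc', mul_div_cancel_left₀ α hη0.ne']
  have ey : f y ^ α = (f y ^ η) ^ t := by
    rw [← Real.rpow_mul hfy.le]
    congr 1
    field_simp [ht_def, hη0.ne']
    rw [ht_def, mul_div_assoc', mul_div_cancel_left₀ α hη0.ne']
  have ek : k ^ (ω * α / η) = (k ^ ω) ^ t := by
    rw [← Real.rpow_mul hk0.le]
    congr 1
    rw [ht_def]
    field_simp [hη0.ne']
  have hmono : (f x ^ η + f y ^ η) ^ t ≤ (f (Real.sqrt (x ^ 2 + y ^ 2)) ^ η) ^ t :=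
    Real.rpow_le_rpow (by positivity) hsuper ht0
  rw [ge_iff_le, eF, ex, ey, ek]
  calc (1 / 2 : ℝ) ^ t * (f x ^ η) ^ t
        + ((1 + k ^ ω) ^ t - (1 / 2 : ℝ) ^ t) / (k ^ ω) ^ t * (f y ^ η) ^ t
      ≤ (f x ^ η + f y ^ η) ^ t := key
    _ ≤ (f (Real.sqrt (x ^ 2 + y ^ 2)) ^ η) ^ t := hmono
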